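/- In the symmetric group S_{n+1} (Weyl group of type A_n), identify the minimal length representatives W^{P_m} with partitions inside an m × (n+1-m) rectangle via w ↦ (w(m)-m, …, w(1)-1). Then for u, w ∈ W^{P_m}, u ≤ w in Bruhat order if and only if the corresponding partitions satisfy λ(u)ᵢ ≤ λ(w)ᵢ for all 1 ≤ i ≤ m (containment of Young diagrams). -/

import Mathlib

/-- The simple transposition `s_i = (i, i+1)` in `S_{n+1}`. -/
def simpleTransposition (n : ℕ) (i : Fin n) : Equiv.Perm (Fin (n + 1)) :=
  Equiv.swap i.castSucc i.succ

/-- The product of the word of simple transpositions `s_{i₁} ⋯ s_{i_ℓ}`. -/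
def permWordProd (n : ℕ) (l : List (Fin n)) : Equiv.Perm (Fin (n + 1)) :=
  (l.map (simpleTransposition n)).prod

/-- The Coxeter length of a permutation: the minimal length of a word of simple
transpositions expressing it. -/
noncomputable def permLength (n : ℕ) (σ : Equiv.Perm (Fin (n + 1))) : ℕ :=
  sInf {c | ∃ l : List (Fin n), l.length = c ∧ permWordProd n l = σ}

/-- Bruhat order on `S_{n+1}`: `u ≤ w` iff some reduced word for `w` contains a reduced
subword expressing `u`. -/
def BruhatLE (n : ℕ) (u w : Equiv.Perm (Fin (n + 1))) : Prop :=
  ∃ l : List (Fin n), l.length = permLength n w ∧ permWordProd n l = w ∧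
    ∃ l' : List (Fin n), l'.Sublist l ∧ l'.length = permLength n u ∧ permWordProd n l' = u

namespace BruhatAux

variable (n : ℕ)

/-- The set of inversions of a permutation. -/
def invSet (σ : Equiv.Perm (Fin (n + 1))) : Finset (Fin (n + 1) × Fin (n + 1)) :=
  Finset.univ.filter (fun p => p.1 < p.2 ∧ σ p.2 < σ p.1)

/-- The number of inversions. -/
def invOf (σ : Equiv.Perm (Fin (n + 1))) : ℕ := (invSet n σ).card

lemma permWordProd_append (l l' : List (Fin n)) :
    permWordProd n (l ++ l') = permWordProd n l * permWordProd n l' := by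
  simp [permWordProd]

lemma permWordProd_nil : permWordProd n [] = 1 := rfl

lemma permWordProd_singleton (i : Fin n) :
    permWordProd n [i] = simpleTransposition n i := by
  simp [permWordProd]

lemma simpleTransposition_mul_self (i : Fin n) :
    simpleTransposition n i * simpleTransposition n i = 1 := by
  simp [simpleTransposition]

/-- adjacent transposition of positions preserves order except on the pair itself -/
lemma swap_lt_swap {i : Fin n} {a b : Fin (n + 1)} (hab : a < b)
    (hne : ¬(a = i.castSucc ∧ b = i.succ)) :
    Equiv.swap i.castSucc i.succ a < Equiv.swap i.castSucc i.succ b := by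
  have hab' : (a : ℕ) < b := hab
  rw [Fin.lt_def]
  rw [Equiv.swap_apply_def, Equiv.swap_apply_def]
  have h1 : (a = i.castSucc ↔ (a : ℕ) = (i : ℕ)) := by
    rw [Fin.ext_iff]; simp
  have h2 : (a = i.succ ↔ (a : ℕ) = (i : ℕ) + 1) := by
    rw [Fin.ext_iff]; simp
  have h3 : (b = i.castSucc ↔ (b : ℕ) = (i : ℕ)) := by
    rw [Fin.ext_iff]; simp
  have h4 : (b = i.succ ↔ (b : ℕ) = (i : ℕ) + 1) := by
    rw [Fin.ext_iff]; simp
  have hne' : ¬((a : ℕ) = (i : ℕ) ∧ (b : ℕ) = (i : ℕ) + 1) := by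
    intro h; exact hne ⟨h1.2 h.1, h4.2 h.2⟩
  split_ifs with e1 e2 e3 e4 e5 e6 e7 e8 <;>
    simp only [Fin.coe_castSucc, Fin.val_succ, h1, h2, h3, h4] at * <;> omega

lemma invOf_mul_of_ascent (σ : Equiv.Perm (Fin (n + 1))) (i : Fin n)
    (h : σ i.castSucc < σ i.succ) :
    invOf n (σ * simpleTransposition n i) = invOf n σ + 1 := by
  classical
  set t := Equiv.swap i.castSucc i.succ with ht
  have htt : ∀ x, t (t x) = x := fun x => Equiv.swap_apply_self _ _ x
  have happ : ∀ x, (σ * simpleTransposition n i) x = σ (t x) := fun x => rfl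
  have hlt : i.castSucc < i.succ := Fin.castSucc_lt_succ
  have key : invSet n (σ * simpleTransposition n i)
      = insert (i.castSucc, i.succ) ((invSet n σ).image (fun p => (t p.1, t p.2))) := by
    ext ⟨x, y⟩
    simp only [invSet, Finset.mem_filter, Finset.mem_univ, true_and, Finset.mem_insert,
      Finset.mem_image, Prod.mk.injEq, happ]
    constructor
    · rintro ⟨hxy, hvy⟩
      by_cases hc : x = i.castSucc ∧ y = i.succ
      · exact Or.inl hc
      · refine Or.inr ⟨(t x, t y), ⟨?_, ?_⟩, ?_, ?_⟩
        · exact swap_lt_swap n hxy hc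
        · simpa only [htt] using hvy
        · exact htt x
        · exact htt y
    · rintro (⟨hx, hy⟩ | ⟨⟨p1, p2⟩, ⟨hp12, hpv⟩, hx, hy⟩)
      · subst hx; subst hy
        refine ⟨hlt, ?_⟩
        have e1 : t i.succ = i.castSucc := Equiv.swap_apply_right _ _
        have e2 : t i.castSucc = i.succ := Equiv.swap_apply_left _ _
        rw [e1, e2]; exact h
      · subst hx; subst hy
        constructor
        · apply swap_lt_swap n hp12
          rintro ⟨h1, h2⟩
          have hcon : σ i.succ < σ i.castSucc := by
            rw [← h1, ← h2]; exact hpv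
          exact absurd h (not_lt.2 hcon.le)
        · simpa only [htt] using hpv
  have hinj : Function.Injective (fun p : Fin (n+1) × Fin (n+1) => (t p.1, t p.2)) := by
    intro p q hpq
    simp only [Prod.mk.injEq] at hpq
    exact Prod.ext (t.injective hpq.1) (t.injective hpq.2)
  have hnotmem : (i.castSucc, i.succ) ∉ (invSet n σ).image (fun p => (t p.1, t p.2)) := by
    simp only [Finset.mem_image, Prod.mk.injEq, not_exists]
    rintro ⟨p1, p2⟩ ⟨hp, h1, h2⟩
    simp only [invSet, Finset.mem_filter] at hp
    have e1 : p1 = i.succ := by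
      have h1' := congrArg t h1
      rw [htt] at h1'
      exact h1'.trans (Equiv.swap_apply_left _ _)
    have e2 : p2 = i.castSucc := by
      have h2' := congrArg t h2
      rw [htt] at h2'
      exact h2'.trans (Equiv.swap_apply_right _ _)
    rw [e1, e2] at hp
    exact absurd hp.2.1 (not_lt.2 hlt.le)
  rw [invOf, key, Finset.card_insert_of_notMem hnotmem,
    Finset.card_image_of_injective _ hinj]
  rfl

lemma invOf_mul_of_descent (σ : Equiv.Perm (Fin (n + 1))) (i : Fin n)
    (h : σ i.succ < σ i.castSucc) :
    invOf n (σ * simpleTransposition n i) + 1 = invOf n σ := by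
  have hs := invOf_mul_of_ascent n (σ * simpleTransposition n i) i ?_
  · rw [mul_assoc, simpleTransposition_mul_self, mul_one] at hs
    omega
  · have e1 : (σ * simpleTransposition n i) i.castSucc = σ i.succ := by
      simp [simpleTransposition, Equiv.Perm.mul_apply, Equiv.swap_apply_left]
    have e2 : (σ * simpleTransposition n i) i.succ = σ i.castSucc := by
      simp [simpleTransposition, Equiv.Perm.mul_apply, Equiv.swap_apply_right]
    rw [e1, e2]; exact h

lemma invOf_one : invOf n 1 = 0 := by
  simp only [invOf, invSet, Finset.card_eq_zero]
  ext ⟨x, y⟩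
  simp only [Finset.mem_filter, Finset.mem_univ, true_and, Finset.notMem_empty, iff_false,
    Equiv.Perm.one_apply, not_and]
  intro hmem
  have h := (Finset.mem_filter.1 hmem).2
  exact absurd h.1 (not_lt.2 h.2.le)

lemma strictMono_eq_one {σ : Equiv.Perm (Fin (n + 1))} (h : StrictMono σ) : σ = 1 := by
  have := (StrictMono.range_inj h strictMono_id).1 (by
    rw [Set.range_id]; exact σ.surjective.range_eq)
  ext x
  exact Fin.ext_iff.1 (congrFun this x)

lemma eq_one_of_invOf_eq_zero {σ : Equiv.Perm (Fin (n + 1))} (h : invOf n σ = 0) : σ = 1 := by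
  apply strictMono_eq_one
  intro a b hab
  have : (a, b) ∉ invSet n σ := by
    intro hmem
    have := Finset.card_eq_zero.1 h
    simp [this] at hmem
  simp only [invSet, Finset.mem_filter, Finset.mem_univ, true_and, not_and, not_lt] at this
  exact lt_of_le_of_ne (this hab) (fun he => absurd (σ.injective he) hab.ne)

lemma invOf_le_length (l : List (Fin n)) : invOf n (permWordProd n l) ≤ l.length := by
  induction l using List.reverseRecOn with
  | nil => simp [permWordProd_nil, invOf_one]
  | append_singleton l i ih =>
    rw [permWordProd_append]
    rw [permWordProd_singleton]
    rcases lt_or_ge ((permWordProd n l) i.castSucc) ((permWordProd n l) i.succ) with hc | hc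
    · rw [invOf_mul_of_ascent n _ i hc]; simpa using ih
    · have hne : (permWordProd n l) i.succ < (permWordProd n l) i.castSucc :=
        lt_of_le_of_ne hc (fun he => by
          have := (permWordProd n l).injective he
          exact absurd this (Fin.castSucc_lt_succ (i := i)).ne')
      have := invOf_mul_of_descent n _ i hne
      simp only [List.length_append, List.length_singleton]
      omega

lemma exists_reduced_word (σ : Equiv.Perm (Fin (n + 1))) :
    ∃ l : List (Fin n), l.length = invOf n σ ∧ permWordProd n l = σ := by
  generalize hk : invOf n σ = k
  induction k generalizing σ with
  | zero => exact ⟨[], rfl, by rw [permWordProd_nil, eq_one_of_invOf_eq_zero n hk]⟩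
  | succ k ih =>
    -- σ has an adjacent descent
    have hσ : σ ≠ 1 := by
      intro h; rw [h, invOf_one] at hk; omega
    have hdesc : ∃ i : Fin n, σ i.succ < σ i.castSucc := by
      by_contra hno
      push_neg at hno
      apply hσ
      apply strictMono_eq_one
      have hmono : ∀ i : Fin n, σ i.castSucc < σ i.succ := by
        intro i
        refine lt_of_le_of_ne (hno i) fun he => ?_
        have := σ.injective he.symm
        exact absurd this (Fin.castSucc_lt_succ (i := i)).ne'
      intro a b hab
      -- strict mono from adjacent ascents
      have key : ∀ d a : ℕ, ∀ (h1 : a < n + 1) (h2 : a + d < n + 1),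
          d ≠ 0 → σ ⟨a, h1⟩ < σ ⟨a + d, h2⟩ := by
        intro d
        induction d with
        | zero => omega
        | succ d ihd =>
          intro a h1 h2 _
          rcases eq_or_ne d 0 with rfl | hd
          · have := hmono ⟨a, by omega⟩
            simpa [Fin.castSucc, Fin.succ, Fin.ext_iff] using this
          · calc σ ⟨a, h1⟩ < σ ⟨a + d, by omega⟩ := ihd a h1 (by omega) hd
              _ < σ ⟨a + d + 1, by omega⟩ := by
                have := hmono ⟨a + d, by omega⟩
                simpa [Fin.castSucc, Fin.succ, Fin.ext_iff, Nat.add_assoc] using this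
      have hab' : (a : ℕ) < (b : ℕ) := hab
      have := key ((b : ℕ) - (a : ℕ)) (a : ℕ) a.isLt (by omega) (by omega)
      have hb : (⟨(a : ℕ) + ((b : ℕ) - (a : ℕ)), by omega⟩ : Fin (n + 1)) = b := by
        ext; simp; omega
      have ha : (⟨(a : ℕ), a.isLt⟩ : Fin (n + 1)) = a := rfl
      rwa [hb, ha] at this
    obtain ⟨i, hi⟩ := hdesc
    have hstep := invOf_mul_of_descent n σ i hi
    rw [hk] at hstep
    obtain ⟨l, hl, hp⟩ := ih (σ * simpleTransposition n i) (by omega)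
    refine ⟨l ++ [i], by simp [hl], ?_⟩
    rw [permWordProd_append, hp, permWordProd_singleton, mul_assoc,
      simpleTransposition_mul_self, mul_one]

lemma permLength_eq_invOf (σ : Equiv.Perm (Fin (n + 1))) :
    permLength n σ = invOf n σ := by
  apply le_antisymm
  · obtain ⟨l, hl, hp⟩ := exists_reduced_word n σ
    exact Nat.sInf_le ⟨l, hl, hp⟩
  · apply le_csInf
    · obtain ⟨l, hl, hp⟩ := exists_reduced_word n σ
      exact ⟨invOf n σ, l, hl, hp⟩
    · rintro b ⟨l, hl, hp⟩
      rw [← hp, ← hl]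
      exact invOf_le_length n l

end BruhatAux

namespace BruhatAux

variable (n : ℕ)

/-- rank function: number of positions `a < p` with value `≥ q`. -/
def rk (σ : Equiv.Perm (Fin (n + 1))) (p : ℕ) (q : Fin (n + 1)) : ℕ :=
  (Finset.univ.filter (fun a : Fin (n + 1) => (a : ℕ) < p ∧ q ≤ σ a)).card

lemma rk_mono (σ : Equiv.Perm (Fin (n + 1))) {p p' : ℕ} (h : p ≤ p') (q : Fin (n + 1)) :
    rk n σ p q ≤ rk n σ p' q := by
  apply Finset.card_le_card
  intro a ha
  simp only [Finset.mem_filter, Finset.mem_univ, true_and] at ha ⊢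
  exact ⟨lt_of_lt_of_le ha.1 h, ha.2⟩

lemma rk_succ (σ : Equiv.Perm (Fin (n + 1))) {p : ℕ} (hp : p < n + 1) (q : Fin (n + 1)) :
    rk n σ (p + 1) q = rk n σ p q + (if q ≤ σ ⟨p, hp⟩ then 1 else 0) := by
  classical
  have hsplit : (Finset.univ.filter (fun a : Fin (n + 1) => (a : ℕ) < p + 1 ∧ q ≤ σ a))
      = (Finset.univ.filter (fun a : Fin (n + 1) => (a : ℕ) < p ∧ q ≤ σ a))
        ∪ (Finset.univ.filter (fun a : Fin (n + 1) => a = ⟨p, hp⟩ ∧ q ≤ σ a)) := by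
    ext a
    simp only [Finset.mem_filter, Finset.mem_univ, true_and, Finset.mem_union, Fin.ext_iff]
    constructor
    · rintro ⟨h1, h2⟩
      rcases Nat.lt_succ_iff_lt_or_eq.1 h1 with h | h
      · exact Or.inl ⟨h, h2⟩
      · exact Or.inr ⟨h, h2⟩
    · rintro (⟨h1, h2⟩ | ⟨h1, h2⟩) <;> exact ⟨by omega, h2⟩
  have hdisj : Disjoint (Finset.univ.filter (fun a : Fin (n + 1) => (a : ℕ) < p ∧ q ≤ σ a))
      (Finset.univ.filter (fun a : Fin (n + 1) => a = ⟨p, hp⟩ ∧ q ≤ σ a)) := by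
    rw [Finset.disjoint_left]
    intro a ha hb
    simp only [Finset.mem_filter, Finset.mem_univ, true_and] at ha hb
    rw [hb.1] at ha
    exact absurd ha.1 (by simp)
  have hcard2 : (Finset.univ.filter (fun a : Fin (n + 1) => a = ⟨p, hp⟩ ∧ q ≤ σ a)).card
      = if q ≤ σ ⟨p, hp⟩ then 1 else 0 := by
    split_ifs with hq
    · rw [Finset.card_eq_one]
      refine ⟨⟨p, hp⟩, ?_⟩
      ext a
      simp only [Finset.mem_filter, Finset.mem_univ, true_and, Finset.mem_singleton]
      constructor
      · rintro ⟨h1, _⟩; exact h1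
      · rintro rfl; exact ⟨rfl, hq⟩
    · rw [Finset.card_eq_zero]
      ext a
      simp only [Finset.mem_filter, Finset.mem_univ, true_and, Finset.notMem_empty, iff_false,
        not_and]
      rintro rfl; exact hq
  rw [rk, hsplit, Finset.card_union_of_disjoint hdisj, hcard2]
  rfl

lemma rk_mul_swap (σ : Equiv.Perm (Fin (n + 1))) (i : Fin n) {p : ℕ} (hp : p ≠ (i : ℕ) + 1)
    (q : Fin (n + 1)) :
    rk n (σ * simpleTransposition n i) p q = rk n σ p q := by
  classical
  set t := Equiv.swap i.castSucc i.succ with ht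
  have htt : ∀ x, t (t x) = x := fun x => Equiv.swap_apply_self _ _ x
  have happ : ∀ x, (σ * simpleTransposition n i) x = σ (t x) := fun x => rfl
  have hval : ∀ a : Fin (n + 1), (a : ℕ) < p → ((t a : ℕ) < p) := by
    intro a ha
    rcases eq_or_ne a i.castSucc with rfl | h1
    · have : t i.castSucc = i.succ := Equiv.swap_apply_left _ _
      rw [this]
      simp only [Fin.coe_castSucc] at ha
      simp only [Fin.val_succ]
      omega
    · rcases eq_or_ne a i.succ with rfl | h2
      · have : t i.succ = i.castSucc := Equiv.swap_apply_right _ _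
        rw [this]
        simp only [Fin.val_succ] at ha
        simp only [Fin.coe_castSucc]
        omega
      · rw [ht, Equiv.swap_apply_of_ne_of_ne h1 h2]
        exact ha
  apply Finset.card_nbij' (fun a => t a) (fun a => t a)
  · intro a ha
    simp only [Finset.mem_coe, Finset.mem_filter, Finset.mem_univ, true_and, happ] at ha ⊢
    exact ⟨hval a ha.1, ha.2⟩
  · intro a ha
    simp only [Finset.mem_coe, Finset.mem_filter, Finset.mem_univ, true_and, happ] at ha ⊢
    refine ⟨hval a ha.1, ?_⟩
    rw [htt]
    exact ha.2
  · intro a _; exact htt a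
  · intro a _; exact htt a

lemma castSucc_mk (i : Fin n) (hi : (i : ℕ) < n + 1) :
    (⟨(i : ℕ), hi⟩ : Fin (n + 1)) = i.castSucc := by
  ext; simp

lemma succ_mk (i : Fin n) (hi : (i : ℕ) + 1 < n + 1) :
    (⟨(i : ℕ) + 1, hi⟩ : Fin (n + 1)) = i.succ := by
  ext; simp

lemma mul_swap_castSucc (σ : Equiv.Perm (Fin (n + 1))) (i : Fin n) :
    (σ * simpleTransposition n i) i.castSucc = σ i.succ := by
  have : (σ * simpleTransposition n i) i.castSucc = σ (Equiv.swap i.castSucc i.succ i.castSucc) := rfl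
  rw [this, Equiv.swap_apply_left]

lemma mul_swap_succ (σ : Equiv.Perm (Fin (n + 1))) (i : Fin n) :
    (σ * simpleTransposition n i) i.succ = σ i.castSucc := by
  have : (σ * simpleTransposition n i) i.succ = σ (Equiv.swap i.castSucc i.succ i.succ) := rfl
  rw [this, Equiv.swap_apply_right]

lemma rk_le_of_ascent (σ : Equiv.Perm (Fin (n + 1))) (i : Fin n)
    (h : σ i.castSucc < σ i.succ) (p : ℕ) (q : Fin (n + 1)) :
    rk n σ p q ≤ rk n (σ * simpleTransposition n i) p q := by
  rcases eq_or_ne p ((i : ℕ) + 1) with rfl | hp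
  · have hi : (i : ℕ) < n + 1 := by omega
    rw [rk_succ n σ hi q, rk_succ n _ hi q, rk_mul_swap n σ i (by omega) q,
      castSucc_mk n i hi, mul_swap_castSucc]
    have : (if q ≤ σ i.castSucc then 1 else 0) ≤ (if q ≤ σ i.succ then 1 else 0) := by
      split_ifs with h1 h2 h2
      · exact le_refl _
      · exact absurd (le_of_lt (lt_of_le_of_lt h1 h)) h2
      · omega
      · exact le_refl _
    omega
  · rw [rk_mul_swap n σ i hp q]

lemma rk_step (τ σ : Equiv.Perm (Fin (n + 1))) (i : Fin n)
    (hasc : σ i.castSucc < σ i.succ)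
    (H : ∀ p q, rk n τ p q ≤ rk n σ p q) (p : ℕ) (q : Fin (n + 1)) :
    rk n (τ * simpleTransposition n i) p q ≤ rk n (σ * simpleTransposition n i) p q := by
  rcases eq_or_ne p ((i : ℕ) + 1) with rfl | hp
  · have hi : (i : ℕ) < n + 1 := by omega
    rw [rk_succ n _ hi q, rk_succ n _ hi q, rk_mul_swap n σ i (by omega) q,
      rk_mul_swap n τ i (by omega) q, castSucc_mk n i hi, mul_swap_castSucc, mul_swap_castSucc]
    by_cases h1 : q ≤ τ i.succ
    · by_cases h2 : q ≤ σ i.succ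
      · simp only [if_pos h1, if_pos h2]
        exact Nat.add_le_add_right (H _ q) 1
      · -- bad case : q ≤ τ i.succ, ¬ q ≤ σ i.succ, so σ i.castSucc < σ i.succ < q
        simp only [if_pos h1, if_neg h2]
        have hq2 : σ i.succ < q := lt_of_not_ge h2
        have hii : (i : ℕ) + 1 < n + 1 := by have := i.isLt; omega
        have step1 : rk n τ ((i : ℕ)) q + 1 ≤ rk n τ ((i : ℕ) + 2) q := by
          have e1 : rk n τ ((i : ℕ) + 2) q
              = rk n τ ((i : ℕ) + 1) q + (if q ≤ τ ⟨(i : ℕ) + 1, hii⟩ then 1 else 0) :=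
            rk_succ n τ hii q
          have e2 : rk n τ ((i : ℕ) + 1) q
              = rk n τ ((i : ℕ)) q + (if q ≤ τ ⟨(i : ℕ), hi⟩ then 1 else 0) :=
            rk_succ n τ hi q
          rw [succ_mk n i hii] at e1
          rw [if_pos h1] at e1
          omega
        have step2 : rk n σ ((i : ℕ) + 2) q = rk n σ ((i : ℕ)) q := by
          have e1 : rk n σ ((i : ℕ) + 2) q
              = rk n σ ((i : ℕ) + 1) q + (if q ≤ σ ⟨(i : ℕ) + 1, hii⟩ then 1 else 0) :=
            rk_succ n σ hii q
          have e2 : rk n σ ((i : ℕ) + 1) q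
              = rk n σ ((i : ℕ)) q + (if q ≤ σ ⟨(i : ℕ), hi⟩ then 1 else 0) :=
            rk_succ n σ hi q
          rw [succ_mk n i hii, if_neg h2] at e1
          rw [castSucc_mk n i hi, if_neg (not_le.2 (hasc.trans hq2))] at e2
          omega
        have := H ((i : ℕ) + 2) q
        omega
    · simp only [if_neg h1]
      have hH := H ((i : ℕ)) q
      split_ifs <;> omega
  · rw [rk_mul_swap n σ i hp q, rk_mul_swap n τ i hp q]
    exact H p q

/-- Forward lemma: a subword of a reduced word has dominated rank function. -/
lemma rk_le_of_sublist : ∀ (l l' : List (Fin n)), l'.Sublist l →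
    invOf n (permWordProd n l) = l.length →
    ∀ p q, rk n (permWordProd n l') p q ≤ rk n (permWordProd n l) p q := by
  intro l
  induction l using List.reverseRecOn with
  | nil =>
    intro l' hsub _
    rw [List.sublist_nil.1 hsub]
    intro p q; exact le_refl _
  | append_singleton l i ih =>
    intro l' hsub hred
    -- the prefix is reduced and the last step is an ascent
    have hlen : invOf n (permWordProd n l) ≤ l.length := invOf_le_length n l
    have hasc : (permWordProd n l) i.castSucc < (permWordProd n l) i.succ := by
      by_contra hc
      push_neg at hc
      have hne : (permWordProd n l) i.succ < (permWordProd n l) i.castSucc :=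
        lt_of_le_of_ne hc (fun he => by
          have := (permWordProd n l).injective he
          exact absurd this (Fin.castSucc_lt_succ (i := i)).ne')
      have := invOf_mul_of_descent n (permWordProd n l) i hne
      rw [← permWordProd_singleton, ← permWordProd_append] at this
      rw [hred] at this
      simp only [List.length_append, List.length_singleton] at this
      omega
    have hred' : invOf n (permWordProd n l) = l.length := by
      have := invOf_mul_of_ascent n (permWordProd n l) i hasc
      rw [← permWordProd_singleton, ← permWordProd_append] at this
      rw [hred] at this
      simp only [List.length_append, List.length_singleton] at this
      omega
    rw [List.sublist_append_iff] at hsub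
    obtain ⟨l₁, l₂, rfl, hsub1, hsub2⟩ := hsub
    rw [permWordProd_append, permWordProd_append]
    rcases List.sublist_singleton.mp hsub2 with rfl | rfl
    · rw [permWordProd_nil, mul_one]
      intro p q
      calc rk n (permWordProd n l₁) p q ≤ rk n (permWordProd n l) p q :=
            ih l₁ hsub1 hred' p q
        _ ≤ rk n (permWordProd n l * permWordProd n [i]) p q := by
            rw [permWordProd_singleton]
            exact rk_le_of_ascent n _ i hasc p q
    · rw [permWordProd_singleton]
      intro p q
      exact rk_step n _ _ i hasc (ih l₁ hsub1 hred') p q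

end BruhatAux

namespace BruhatAux

variable (n : ℕ)

/-- value of σ at a natural index (junk value `k` out of range) -/
def valAt (σ : Equiv.Perm (Fin (n + 1))) (k : ℕ) : ℕ :=
  if h : k < n + 1 then (σ ⟨k, h⟩ : ℕ) else k

/-- number of inversions with first coordinate `a` -/
def cInv (σ : Equiv.Perm (Fin (n + 1))) (a : Fin (n + 1)) : ℕ :=
  (Finset.univ.filter (fun b => a < b ∧ σ b < σ a)).card

lemma invOf_eq_sum_cInv (σ : Equiv.Perm (Fin (n + 1))) :
    invOf n σ = ∑ a : Fin (n + 1), cInv n σ a := by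
  classical
  rw [invOf, Finset.card_eq_sum_card_fiberwise (f := Prod.fst) (t := Finset.univ)
    (fun x _ => Finset.mem_univ _)]
  apply Finset.sum_congr rfl
  intro a _
  apply Finset.card_nbij' (fun p => p.2) (fun b => (a, b))
  · rintro ⟨x, y⟩ hp
    simp only [Finset.mem_coe, invSet, Finset.mem_filter, Finset.mem_univ, true_and] at hp ⊢
    obtain ⟨⟨h1, h2⟩, h3⟩ := hp
    subst h3
    exact ⟨h1, h2⟩
  · intro b hb
    simp only [Finset.mem_coe, invSet, Finset.mem_filter, Finset.mem_univ, true_and] at hb ⊢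
    exact ⟨hb, trivial⟩
  · rintro ⟨x, y⟩ hp
    simp only [Finset.mem_coe, invSet, Finset.mem_filter, Finset.mem_univ, true_and] at hp
    obtain ⟨-, h3⟩ := hp
    subst h3
    rfl
  · intro b _
    rfl

lemma cInv_eq_zero (σ : Equiv.Perm (Fin (n + 1))) (m : ℕ) (a : Fin (n + 1))
    (h2 : ∀ x y : Fin (n + 1), x < y → m ≤ (x : ℕ) → σ x < σ y)
    (ha : m ≤ (a : ℕ)) : cInv n σ a = 0 := by
  rw [cInv, Finset.card_eq_zero]
  ext b
  simp only [Finset.mem_filter, Finset.mem_univ, true_and, Finset.notMem_empty, iff_false,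
    not_and, not_lt]
  intro hab
  exact (h2 a b hab ha).le

lemma cInv_eq (σ : Equiv.Perm (Fin (n + 1))) (m : ℕ) (a : Fin (n + 1))
    (h1 : ∀ x y : Fin (n + 1), x < y → (y : ℕ) < m → σ x < σ y)
    (ha : (a : ℕ) < m) : cInv n σ a = (σ a : ℕ) - (a : ℕ) := by
  classical
  set S := Finset.univ.filter (fun b => σ b < σ a) with hS
  set T := Finset.univ.filter (fun b : Fin (n + 1) => b < a) with hT
  have hTS : T ⊆ S := by
    intro b hb
    simp only [hS, hT, Finset.mem_filter, Finset.mem_univ, true_and] at hb ⊢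
    exact h1 b a hb ha
  have hkey : Finset.univ.filter (fun b => a < b ∧ σ b < σ a) = S \ T := by
    ext b
    simp only [hS, hT, Finset.mem_sdiff, Finset.mem_filter, Finset.mem_univ, true_and, not_lt]
    constructor
    · rintro ⟨hab, hv⟩
      exact ⟨hv, hab.le⟩
    · rintro ⟨hv, hab⟩
      refine ⟨lt_of_le_of_ne hab ?_, hv⟩
      rintro rfl
      exact absurd hv (lt_irrefl _)
  have hcardS : S.card = (σ a : ℕ) := by
    rw [show S.card = (Finset.Iio (σ a)).card from ?_, Fin.card_Iio]
    apply Finset.card_nbij' (fun b => σ b) (fun v => σ.symm v)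
    · intro b hb
      simp only [Finset.mem_coe, hS, Finset.mem_filter, Finset.mem_univ, true_and] at hb
      simpa [Finset.mem_Iio] using hb
    · intro v hv
      simp only [Finset.mem_coe, hS, Finset.mem_filter, Finset.mem_univ, true_and]
      simp only [Finset.mem_coe, Finset.mem_Iio] at hv
      simpa using hv
    · intro b _; simp
    · intro v _; simp
  have hcardT : T.card = (a : ℕ) := by
    have : T = Finset.Iio a := by
      ext b
      simp [hT, Finset.mem_Iio]
    rw [this, Fin.card_Iio]
  rw [cInv, hkey, Finset.card_sdiff_of_subset hTS, hcardS, hcardT]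

lemma invOf_grassmannian (σ : Equiv.Perm (Fin (n + 1))) (m : ℕ) (hm : m ≤ n + 1)
    (h1 : ∀ x y : Fin (n + 1), x < y → (y : ℕ) < m → σ x < σ y)
    (h2 : ∀ x y : Fin (n + 1), x < y → m ≤ (x : ℕ) → σ x < σ y) :
    invOf n σ = ∑ k ∈ Finset.range m, (valAt n σ k - k) := by
  classical
  rw [invOf_eq_sum_cInv]
  have hF : ∀ a : Fin (n + 1), cInv n σ a
      = (fun k => if h : k < n + 1 then cInv n σ ⟨k, h⟩ else 0) (a : ℕ) := by
    intro a
    simp [a.isLt]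
  calc ∑ a : Fin (n + 1), cInv n σ a
      = ∑ k ∈ Finset.range (n + 1), (if h : k < n + 1 then cInv n σ ⟨k, h⟩ else 0) := by
        rw [← Fin.sum_univ_eq_sum_range]
        exact Finset.sum_congr rfl (fun a _ => hF a)
    _ = ∑ k ∈ Finset.range m, (if h : k < n + 1 then cInv n σ ⟨k, h⟩ else 0) := by
        symm
        apply Finset.sum_subset (Finset.range_subset_range.2 hm)
        intro k hk hknot
        simp only [Finset.mem_range] at hk hknot
        rw [dif_pos hk]
        exact cInv_eq_zero n σ m ⟨k, hk⟩ h2 (by simpa using hknot)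
    _ = ∑ k ∈ Finset.range m, (valAt n σ k - k) := by
        apply Finset.sum_congr rfl
        intro k hk
        simp only [Finset.mem_range] at hk
        have hk' : k < n + 1 := lt_of_lt_of_le hk hm
        rw [dif_pos hk', cInv_eq n σ m ⟨k, hk'⟩ h1 (by simpa using hk), valAt, dif_pos hk']

end BruhatAux

namespace BruhatAux

variable (n : ℕ)

def natBlock (a b : ℕ) : List ℕ := (List.range' a (b - a)).reverse

def natWord (f : ℕ → ℕ) : ℕ → ℕ → List ℕ
  | _, 0 => []
  | a, d + 1 => natBlock a (f a) ++ natWord f (a + 1) d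

lemma natWord_zero (f : ℕ → ℕ) (a : ℕ) : natWord f a 0 = [] := rfl

lemma natWord_succ (f : ℕ → ℕ) (a d : ℕ) :
    natWord f a (d + 1) = natBlock a (f a) ++ natWord f (a + 1) d := rfl

def nswap (x : ℕ) : Equiv.Perm (Fin (n + 1)) :=
  if h : x < n then simpleTransposition n ⟨x, h⟩ else 1

def natProd (l : List ℕ) : Equiv.Perm (Fin (n + 1)) := (l.map (nswap n)).prod

lemma natProd_nil : natProd n [] = 1 := rfl

lemma natProd_cons (x : ℕ) (l : List ℕ) :
    natProd n (x :: l) = nswap n x * natProd n l := by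
  simp [natProd]

lemma natProd_append (l l' : List ℕ) :
    natProd n (l ++ l') = natProd n l * natProd n l' := by
  simp [natProd]

lemma nswap_val {x : ℕ} (hx : x < n) (z : Fin (n + 1)) :
    ((nswap n x) z : ℕ) = if (z : ℕ) = x then x + 1 else if (z : ℕ) = x + 1 then x else z := by
  rw [nswap, dif_pos hx, simpleTransposition, Equiv.swap_apply_def]
  have h1 : (z = Fin.castSucc ⟨x, hx⟩ ↔ (z : ℕ) = x) := by rw [Fin.ext_iff]; simp
  have h2 : (z = Fin.succ ⟨x, hx⟩ ↔ (z : ℕ) = x + 1) := by rw [Fin.ext_iff]; simp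
  split_ifs with e1 e2 <;> simp only [h1, h2] at * <;> simp_all <;> omega

lemma natBlock_empty {a b : ℕ} (h : b ≤ a) : natBlock a b = [] := by
  rw [natBlock, Nat.sub_eq_zero_of_le h]
  rfl

lemma natBlock_succ {a b : ℕ} (hab : a ≤ b) : natBlock a (b + 1) = b :: natBlock a b := by
  rw [natBlock, natBlock, show b + 1 - a = (b - a) + 1 by omega, List.range'_concat,
    List.reverse_append]
  simp only [List.reverse_cons, List.reverse_nil, List.nil_append, List.singleton_append]
  congr 1
  omega

lemma natBlock_mem {a b x : ℕ} (h : x ∈ natBlock a b) : a ≤ x ∧ x < b := by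
  rw [natBlock, List.mem_reverse, List.mem_range'_1] at h
  omega

lemma natBlock_sublist (a : ℕ) {b b' : ℕ} (h : b ≤ b') :
    (natBlock a b).Sublist (natBlock a b') := by
  apply List.Sublist.reverse
  have key := List.sublist_append_left (List.range' a (b - a))
    (List.range' (a + 1 * (b - a)) ((b' - a) - (b - a)))
  rw [List.range'_append] at key
  convert key using 2
  omega

lemma natBlock_length (a b : ℕ) : (natBlock a b).length = b - a := by
  rw [natBlock, List.length_reverse, List.length_range']

lemma natWord_length (f : ℕ → ℕ) : ∀ (d a : ℕ),
    (natWord f a d).length = ∑ k ∈ Finset.range d, (f (a + k) - (a + k)) := by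
  intro d
  induction d with
  | zero => intro a; simp [natWord_zero]
  | succ d ih =>
    intro a
    rw [natWord_succ, List.length_append, natBlock_length, ih (a + 1), Finset.sum_range_succ']
    have : ∀ k, f (a + (k + 1)) - (a + (k + 1)) = f (a + 1 + k) - (a + 1 + k) := by
      intro k; rw [show a + (k + 1) = a + 1 + k by omega]
    simp only [this, Nat.add_zero]
    omega

lemma natWord_lt (f : ℕ → ℕ) : ∀ (d a : ℕ), (∀ k, a ≤ k → k < a + d → f k ≤ n) →
    ∀ x, x ∈ natWord f a d → x < n := by
  intro d
  induction d with
  | zero => intro a _ x hx; rw [natWord_zero] at hx; simp at hx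
  | succ d ih =>
    intro a hf x hx
    rw [natWord_succ, List.mem_append] at hx
    rcases hx with hx | hx
    · have := natBlock_mem hx
      have := hf a (le_refl a) (by omega)
      omega
    · exact ih (a + 1) (fun k hk hk' => hf k (by omega) (by omega)) x hx

lemma natWord_congr (f g : ℕ → ℕ) : ∀ (d a : ℕ),
    (∀ k, a ≤ k → k < a + d → f k = g k) → natWord f a d = natWord g a d := by
  intro d
  induction d with
  | zero => intro a _; rfl
  | succ d ih =>
    intro a h
    rw [natWord_succ, natWord_succ, h a (le_refl a) (by omega), ih (a + 1) (fun k hk hk' => h k (by omega) (by omega))]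

lemma natWord_sublist (f g : ℕ → ℕ) : ∀ (d a : ℕ),
    (∀ k, a ≤ k → k < a + d → f k ≤ g k) → (natWord f a d).Sublist (natWord g a d) := by
  intro d
  induction d with
  | zero => intro a _; exact List.Sublist.refl _
  | succ d ih =>
    intro a h
    rw [natWord_succ, natWord_succ]
    exact List.Sublist.append (natBlock_sublist a (h a (le_refl a) (by omega)))
      (ih (a + 1) (fun k hk hk' => h k (by omega) (by omega)))

lemma natProd_natBlock_val {a b : ℕ} (hb : b ≤ n) (hab : a ≤ b) (x : Fin (n + 1)) :
    ((natProd n (natBlock a b)) x : ℕ) =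
      if (x : ℕ) = a then b
      else if a < (x : ℕ) ∧ (x : ℕ) ≤ b then (x : ℕ) - 1 else (x : ℕ) := by
  induction b, hab using Nat.le_induction with
  | base =>
    rw [natBlock_empty (le_refl a), natProd_nil]
    simp only [Equiv.Perm.one_apply]
    split_ifs <;> omega
  | succ b hab ih =>
    have hb' : b ≤ n := by omega
    have hbn : b < n := by omega
    rw [natBlock_succ hab, natProd_cons, Equiv.Perm.mul_apply,
      nswap_val n hbn, ih hb']
    split_ifs <;> omega

lemma natProd_natBlock_inv_val {a b : ℕ} (hb : b ≤ n) (hab : a ≤ b) (w : Fin (n + 1)) :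
    (((natProd n (natBlock a b))⁻¹ w : ℕ)) =
      if (w : ℕ) = b then a
      else if a ≤ (w : ℕ) ∧ (w : ℕ) < b then (w : ℕ) + 1 else (w : ℕ) := by
  set P := natProd n (natBlock a b) with hP
  have hz : P (P⁻¹ w) = w := Equiv.apply_symm_apply P w
  have E := natProd_natBlock_val n hb hab (P⁻¹ w)
  rw [hz] at E
  -- E : (w : ℕ) = if ... (P⁻¹ w : ℕ) ...
  split_ifs at E ⊢ <;> omega

/-- fixed below `a` forces values at positions `≥ a` to be `≥ a` -/
lemma fix_low_ge (σ : Equiv.Perm (Fin (n + 1))) (a : ℕ)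
    (Hlow : ∀ x : Fin (n + 1), (x : ℕ) < a → σ x = x) (y : Fin (n + 1)) (hy : a ≤ (y : ℕ)) :
    a ≤ (σ y : ℕ) := by
  by_contra hc
  push_neg at hc
  have := Hlow (σ y) hc
  have := σ.injective this
  rw [this] at hc
  omega

theorem natWord_prod : ∀ (d a : ℕ) (σ : Equiv.Perm (Fin (n + 1))),
    (∀ x : Fin (n + 1), (x : ℕ) < a → σ x = x) →
    (∀ x y : Fin (n + 1), x < y → (y : ℕ) < a + d → σ x < σ y) →
    (∀ x y : Fin (n + 1), x < y → a + d ≤ (x : ℕ) → σ x < σ y) →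
    natProd n (natWord (valAt n σ) a d) = σ := by
  intro d
  induction d with
  | zero =>
    intro a σ Hlow _ Hinc2
    have hmono : StrictMono σ := by
      intro x y hxy
      have hxy' : (x : ℕ) < (y : ℕ) := hxy
      rcases lt_or_ge (y : ℕ) a with hy | hy
      · rw [Hlow x (by omega), Hlow y (by omega)]; exact hxy
      · rcases lt_or_ge (x : ℕ) a with hx | hx
        · have h1 : (σ x : ℕ) = (x : ℕ) := by rw [Hlow x hx]
          have h2 : a ≤ (σ y : ℕ) := fix_low_ge n σ a Hlow y hy
          rw [Fin.lt_def]; omega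
        · exact Hinc2 x y hxy (by omega)
    rw [natWord_zero, natProd_nil, strictMono_eq_one n hmono]
  | succ d ih =>
    intro a σ Hlow Hinc1 Hinc2
    by_cases ha : a < n + 1
    · set A : Fin (n + 1) := ⟨a, ha⟩ with hA
      set b : ℕ := (σ A : ℕ) with hb
      have hbn : b ≤ n := by have := (σ A).isLt; omega
      have hab : a ≤ b := fix_low_ge n σ a Hlow A (le_refl a)
      set P := natProd n (natBlock a b) with hP
      have Pspec := fun x => natProd_natBlock_val n hbn hab x
      have Pinvspec := fun w => natProd_natBlock_inv_val n hbn hab w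
      set τ : Equiv.Perm (Fin (n + 1)) := P⁻¹ * σ with hτ
      have hτx : ∀ x, τ x = P⁻¹ (σ x) := fun x => rfl
      -- (k1) positions < a are fixed by τ; position a as well
      have k1 : ∀ x : Fin (n + 1), (x : ℕ) < a + 1 → τ x = x := by
        intro x hx
        rcases lt_or_ge (x : ℕ) a with hxa | hxa
        · have hσ : σ x = x := Hlow x hxa
          have : (P⁻¹ x : ℕ) = (x : ℕ) := by
            rw [Pinvspec x]
            split_ifs <;> omega
          rw [hτx, hσ]
          exact Fin.ext this
        · have hxA : x = A := Fin.ext (show (x : ℕ) = a by omega)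
          rw [hτx, hxA]
          have : (P⁻¹ (σ A) : ℕ) = a := by
            rw [Pinvspec (σ A)]
            split_ifs <;> omega
          exact Fin.ext this
      -- (k3) positions in (a, a + d + 1) keep their σ-value
      have k3 : ∀ x : Fin (n + 1), a < (x : ℕ) → (x : ℕ) < a + (d + 1) → τ x = σ x := by
        intro x hx1 hx2
        have hAx : A < x := by rw [Fin.lt_def]; exact hx1
        have hσ : σ A < σ x := Hinc1 A x hAx (by omega)
        have hσ' : b < (σ x : ℕ) := hσ
        rw [hτx]
        apply Fin.ext
        rw [Pinvspec (σ x)]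
        split_ifs <;> omega
      -- values at positions ≥ a are ≥ a and ≠ b unless position = a
      have hgea : ∀ x : Fin (n + 1), a ≤ (x : ℕ) → a ≤ (σ x : ℕ) :=
        fun x hx => fix_low_ge n σ a Hlow x hx
      have hneb : ∀ x : Fin (n + 1), a < (x : ℕ) → (σ x : ℕ) ≠ b := by
        intro x hx hc
        have h1 : σ x = σ A := Fin.ext hc
        have h2 : x = A := σ.injective h1
        have h3 : (x : ℕ) = a := by rw [h2]
        omega
      -- IH hypotheses
      have Hlow' : ∀ x : Fin (n + 1), (x : ℕ) < a + 1 → τ x = x := k1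
      have Hinc1' : ∀ x y : Fin (n + 1), x < y → (y : ℕ) < a + 1 + d → τ x < τ y := by
        intro x y hxy hy
        have hxy' : (x : ℕ) < (y : ℕ) := hxy
        rcases lt_or_ge (y : ℕ) (a + 1) with hya | hya
        · rw [k1 x (by omega), k1 y (by omega)]; exact hxy
        · have hty : τ y = σ y := k3 y (by omega) (by omega)
          have hσy : b < (σ y : ℕ) := Hinc1 A y (by rw [Fin.lt_def]; show a < (y : ℕ); omega) (by omega)
          rcases lt_or_ge (x : ℕ) (a + 1) with hxa | hxa
          · rw [k1 x (by omega), hty, Fin.lt_def]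
            omega
          · rw [k3 x (by omega) (by omega), hty]
            exact Hinc1 x y hxy (by omega)
      have Hinc2' : ∀ x y : Fin (n + 1), x < y → a + 1 + d ≤ (x : ℕ) → τ x < τ y := by
        intro x y hxy hx
        have hxy' : (x : ℕ) < (y : ℕ) := hxy
        have hvx : (σ x : ℕ) < (σ y : ℕ) := Hinc2 x y hxy (by omega)
        have hax : a ≤ (σ x : ℕ) := hgea x (by omega)
        have hay : a ≤ (σ y : ℕ) := hgea y (by omega)
        have hbx : (σ x : ℕ) ≠ b := hneb x (by omega)
        have hby : (σ y : ℕ) ≠ b := hneb y (by omega)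
        rw [Fin.lt_def, hτx, hτx, Pinvspec (σ x), Pinvspec (σ y)]
        split_ifs <;> omega
      have hIH := ih (a + 1) τ Hlow' Hinc1' Hinc2'
      -- transfer word between τ and σ
      have hcongr : natWord (valAt n σ) (a + 1) d = natWord (valAt n τ) (a + 1) d := by
        apply natWord_congr
        intro k hk hk'
        rcases lt_or_ge k (n + 1) with hkn | hkn
        · rw [valAt, valAt, dif_pos hkn, dif_pos hkn]
          congr 1
          exact (k3 ⟨k, hkn⟩ (by show a < k; omega) (by show k < a + (d + 1); omega)).symm
        · rw [valAt, valAt]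
          rw [dif_neg (show ¬ k < n + 1 by omega)]
          rw [dif_neg (show ¬ k < n + 1 by omega)]
      have hfa : valAt n σ a = b := by rw [valAt, dif_pos ha]
      rw [natWord_succ, natProd_append, hfa, hcongr, hIH, ← hP, hτ]
      group
    · -- degenerate case : a ≥ n + 1, σ is the identity
      have hσ1 : ∀ x : Fin (n + 1), σ x = x := fun x => Hlow x (by omega)
      have hfa : valAt n σ a = a := by rw [valAt, dif_neg (by omega)]
      have hIH := ih (a + 1) σ (fun x _ => hσ1 x)
        (fun x y hxy _ => by rw [← hσ1 x, ← hσ1 y] at hxy; exact hxy)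
        (fun x y hxy _ => by rw [← hσ1 x, ← hσ1 y] at hxy; exact hxy)
      rw [natWord_succ, natProd_append, hfa, natBlock_empty (le_refl a), natProd_nil, one_mul, hIH]

end BruhatAux


namespace BruhatAux

variable (n : ℕ)

lemma permWordProd_cons (i : Fin n) (l : List (Fin n)) :
    permWordProd n (i :: l) = simpleTransposition n i * permWordProd n l := by
  simp [permWordProd]

lemma self_le_grassmannian (σ : Equiv.Perm (Fin (n + 1))) (m : ℕ)
    (h1 : ∀ x y : Fin (n + 1), x < y → (y : ℕ) < m → σ x < σ y) :
    ∀ k (hk : k < n + 1), k < m → k ≤ (σ ⟨k, hk⟩ : ℕ) := by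
  intro k
  induction k with
  | zero => intro _ _; exact Nat.zero_le _
  | succ k ih =>
    intro hk hkm
    have hk' : k < n + 1 := by omega
    have hstep : σ ⟨k, hk'⟩ < σ ⟨k + 1, hk⟩ := by
      apply h1
      · exact Fin.mk_lt_mk.2 (by omega)
      · show k + 1 < m; omega
    have hih := ih hk' (by omega)
    have hstep' : (σ ⟨k, hk'⟩ : ℕ) < (σ ⟨k + 1, hk⟩ : ℕ) := hstep
    omega

end BruhatAux


open BruhatAux

/-- In `S_{n+1}` (type `A_n`), identify Grassmannian permutations `W^{P_m}` (those
increasing on the first `m` positions and on the last `n+1-m` positions) with partitions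
in an `m × (n+1-m)` rectangle via `w ↦ (w(m)-m, …, w(1)-1)`.  Then for `u, w ∈ W^{P_m}`,
`u ≤ w` in Bruhat order iff the corresponding partitions satisfy `λ(u)ᵢ ≤ λ(w)ᵢ` for all
`i`, i.e. (in 0-indexed form) `u(j) - j ≤ w(j) - j` for every position `j < m`. -/
theorem stmt_14 (n m : ℕ) (hm : 1 ≤ m) (hmn : m ≤ n)
    (u w : Equiv.Perm (Fin (n + 1)))
    (hu1 : ∀ i j : Fin (n + 1), i < j → (j : ℕ) < m → u i < u j)
    (hu2 : ∀ i j : Fin (n + 1), i < j → m ≤ (i : ℕ) → u i < u j)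
    (hw1 : ∀ i j : Fin (n + 1), i < j → (j : ℕ) < m → w i < w j)
    (hw2 : ∀ i j : Fin (n + 1), i < j → m ≤ (i : ℕ) → w i < w j) :
    BruhatLE n u w ↔
      ∀ j : Fin (n + 1), (j : ℕ) < m → (u j : ℕ) - (j : ℕ) ≤ (w j : ℕ) - (j : ℕ) := by
  have hn : 0 < n := lt_of_lt_of_le hm hmn
  constructor
  · -- forward direction
    rintro ⟨l, hlen, hprod, l', hsub, _, hprod'⟩ j hj
    have hinv : invOf n (permWordProd n l) = l.length := by
      rw [hprod, ← permLength_eq_invOf n w, ← hlen]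
    have hrk := rk_le_of_sublist n l l' hsub hinv
    rw [hprod, hprod'] at hrk
    have hle : (u j : ℕ) ≤ (w j : ℕ) := by
      by_contra hc
      push_neg at hc
      have h1r : 1 ≤ rk n u ((j : ℕ) + 1) (u j) := by
        rw [Nat.one_le_iff_ne_zero, ← Nat.pos_iff_ne_zero, rk, Finset.card_pos]
        exact ⟨j, by simp⟩
      have h0 : rk n w ((j : ℕ) + 1) (u j) = 0 := by
        rw [rk, Finset.card_eq_zero]
        ext a
        simp only [Finset.mem_filter, Finset.mem_univ, true_and, Finset.notMem_empty,
          iff_false, not_and, not_le]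
        intro ha
        have hwa : w a ≤ w j := by
          rcases lt_or_eq_of_le (show (a : ℕ) ≤ (j : ℕ) by omega) with h | h
          · exact (hw1 a j h hj).le
          · rw [Fin.ext_iff.2 h]
        calc (w a : ℕ) ≤ (w j : ℕ) := hwa
          _ < (u j : ℕ) := hc
      have := hrk ((j : ℕ) + 1) (u j)
      omega
    omega
  · -- backward direction
    intro hpart
    set g : ℕ → Fin n := fun x => if h : x < n then ⟨x, h⟩ else ⟨0, hn⟩ with hg
    have mapProd : ∀ l : List ℕ, (∀ x ∈ l, x < n) → permWordProd n (l.map g) = natProd n l := by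
      intro l
      induction l with
      | nil => intro _; rfl
      | cons x l ih =>
        intro hl
        have hx : x < n := hl x List.mem_cons_self
        rw [List.map_cons, permWordProd_cons, ih (fun y hy => hl y (List.mem_cons_of_mem x hy)),
          natProd_cons, nswap, dif_pos hx, hg]
        simp only [dif_pos hx]
    have hWu := natWord_prod n m 0 u (fun x hx => absurd hx (by omega))
      (fun x y hxy hy => hu1 x y hxy (by omega)) (fun x y hxy hx => hu2 x y hxy (by omega))
    have hWw := natWord_prod n m 0 w (fun x hx => absurd hx (by omega))
      (fun x y hxy hy => hw1 x y hxy (by omega)) (fun x y hxy hx => hw2 x y hxy (by omega))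
    have hboundu : ∀ k, 0 ≤ k → k < 0 + m → valAt n u k ≤ n := by
      intro k _ hk
      rw [valAt, dif_pos (show k < n + 1 by omega)]
      exact Nat.lt_succ_iff.1 (u _).isLt
    have hboundw : ∀ k, 0 ≤ k → k < 0 + m → valAt n w k ≤ n := by
      intro k _ hk
      rw [valAt, dif_pos (show k < n + 1 by omega)]
      exact Nat.lt_succ_iff.1 (w _).isLt
    have hlenu : (natWord (valAt n u) 0 m).length = invOf n u := by
      rw [natWord_length, invOf_grassmannian n u m (by omega) hu1 hu2]
      apply Finset.sum_congr rfl
      intro k _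
      rw [Nat.zero_add]
    have hlenw : (natWord (valAt n w) 0 m).length = invOf n w := by
      rw [natWord_length, invOf_grassmannian n w m (by omega) hw1 hw2]
      apply Finset.sum_congr rfl
      intro k _
      rw [Nat.zero_add]
    have hsub : (natWord (valAt n u) 0 m).Sublist (natWord (valAt n w) 0 m) := by
      apply natWord_sublist
      intro k _ hk
      have hkn : k < n + 1 := by omega
      rw [valAt, valAt, dif_pos hkn, dif_pos hkn]
      have h1 := hpart ⟨k, hkn⟩ (by show k < m; omega)
      have h2 := self_le_grassmannian n u m hu1 k hkn (by omega)
      have h3 := self_le_grassmannian n w m hw1 k hkn (by omega)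
      simp only [Fin.val_mk] at h1 h2 h3 ⊢
      omega
    refine ⟨(natWord (valAt n w) 0 m).map g, ?_, ?_,
      (natWord (valAt n u) 0 m).map g, List.Sublist.map g hsub, ?_, ?_⟩
    · rw [List.length_map, hlenw, permLength_eq_invOf]
    · rw [mapProd _ (natWord_lt n (valAt n w) m 0 hboundw), hWw]
    · rw [List.length_map, hlenu, permLength_eq_invOf]
    · rw [mapProd _ (natWord_lt n (valAt n u) m 0 hboundu), hWu]
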